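/- For every integer n ≥ 2 and every p ∈ 𝓔 with a_{n−1} ≥ 0, b_{n−1} ≥ 0, c_n ≥ 0 and a_{n−1} + b_{n−1} − c_n ≥ 0, one has L(p) = (a_{n−1}! b_{n−1}!)/(c_n! (a_{n−1} + b_{n−1} − c_n)!) · L(φ(p)), where φ is the map fixing all coordinates except that it exchanges a_{n−1} and c_n, replaces b_{n−1} by a_{n−1} + b_{n−1} − c_n, and replaces b_n by a_{n−1} + b_n − c_n. (The equality holds in [0,∞].) -/

import Mathlib

open MeasureTheory Finset
open scoped ENNReal

noncomputable section

/-- The unit cube `[0,1]^n`. -/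
def cube (n : ℕ) : Set (Fin n → ℝ) := Set.univ.pi fun _ => Set.Icc (0:ℝ) 1

/-- The `k`-th coordinate (1-based indexing) of `x`. -/
def ent {n : ℕ} (x : Fin n → ℝ) (k : ℕ) : ℝ := if h : k - 1 < n then x ⟨k - 1, h⟩ else 0

/-- `δ_k(x) = 1 - x_k δ_{k-1}(x)`, with `δ_0 = 1`. -/
def delta {n : ℕ} (x : Fin n → ℝ) : ℕ → ℝ
  | 0 => 1
  | k + 1 => 1 - ent x (k + 1) * delta x k

/-- The integral `L(p)` for `p = (a_1,…,a_n,b_1,…,b_n,c_2,…,c_n)`. -/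
def Lint (n : ℕ) (a b c : ℕ → ℤ) : ℝ≥0∞ :=
  ∫⁻ x in cube n, ENNReal.ofReal
    ((∏ k ∈ Icc 1 n, ent x k ^ a k * (1 - ent x k) ^ b k) /
      ((∏ k ∈ Icc 2 n, delta x k ^ c k) * delta x n))

/-- Membership in the set `ℰ`, in terms of the components of `p`. -/
def memE (n : ℕ) (a b c : ℕ → ℤ) : Prop :=
  (∀ k, 2 ≤ k → k ≤ n - 1 → c k = 0) ∧
  (n = 3 → a 1 + b 2 = a 3 + b 3) ∧
  (4 ≤ n → a 2 = b 1 ∧ b n = c n ∧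
    ∀ k, 1 ≤ k → k ≤ n - 2 → a k + b (k + 1) = a (k + 2) + b (k + 2))

def F (n : ℕ) (a b c : ℕ → ℤ) (x : Fin n → ℝ) : ℝ≥0∞ :=
  ENNReal.ofReal
    ((∏ k ∈ Icc 1 n, ent x k ^ a k * (1 - ent x k) ^ b k) /
      ((∏ k ∈ Icc 2 n, delta x k ^ c k) * delta x n))


lemma betaNat (p q : ℕ) : ∫ x in (0:ℝ)..1, x ^ p * (1 - x) ^ q
    = (p.factorial * q.factorial : ℝ) / (p + q + 1).factorial := by
  have hu : 0 < (Complex.re (p + 1)) := by simp; positivity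
  have hv : 0 < (Complex.re (q + 1)) := by simp; positivity
  have h := Complex.Gamma_mul_Gamma_eq_betaIntegral (s := (p:ℂ) + 1) (t := (q:ℂ) + 1) hu hv
  rw [Complex.betaIntegral] at h
  have h2 : ∀ x : ℝ, (x:ℂ) ^ ((p:ℂ) + 1 - 1) * (1 - (x:ℂ)) ^ ((q:ℂ) + 1 - 1)
      = ((x ^ p * (1 - x) ^ q : ℝ) : ℂ) := by
    intro x
    push_cast
    rw [add_sub_cancel_right, add_sub_cancel_right, Complex.cpow_natCast, Complex.cpow_natCast]
  simp_rw [h2] at h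
  rw [intervalIntegral.integral_ofReal] at h
  have hg1 : Complex.Gamma ((p:ℂ) + 1) = (p.factorial : ℂ) := by
    exact_mod_cast Complex.Gamma_nat_eq_factorial p
  have hg2 : Complex.Gamma ((q:ℂ) + 1) = (q.factorial : ℂ) := by
    exact_mod_cast Complex.Gamma_nat_eq_factorial q
  have hg3 : Complex.Gamma ((p:ℂ) + 1 + ((q:ℂ) + 1)) = ((p + q + 1).factorial : ℂ) := by
    have : ((p:ℂ) + 1 + ((q:ℂ) + 1)) = ((p + q + 1 : ℕ) : ℂ) + 1 := by push_cast; ring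
    rw [this]
    exact_mod_cast Complex.Gamma_nat_eq_factorial (p + q + 1)
  rw [hg1, hg2, hg3] at h
  have := congrArg Complex.re h
  simp only [Complex.mul_re, Complex.ofReal_re, Complex.natCast_re, Complex.natCast_im,
    Complex.ofReal_im, mul_zero, sub_zero, zero_mul] at this
  have hne : ((p + q + 1).factorial : ℝ) ≠ 0 := by positivity
  field_simp
  linarith [this]

lemma Jval (β : ℝ) (hβ : β ≤ 0) (p q : ℕ) :
    ∫ y in (0:ℝ)..1, y ^ p * (1 - y) ^ q / (1 - β * y) ^ (p + q + 2)
      = ((p.factorial * q.factorial : ℝ) / (p + q + 1).factorial) / (1 - β) ^ (p + 1) := by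
  have huIcc : Set.uIcc (0:ℝ) 1 = Set.Icc 0 1 := Set.uIcc_of_le zero_le_one
  have hd : ∀ w : ℝ, 0 ≤ w → 0 < 1 - β * w := by intro w hw; nlinarith
  have he : (0:ℝ) < 1 - β := by linarith
  set g : ℝ → ℝ := fun w => (1 - w) / (1 - β * w) with hg
  set g' : ℝ → ℝ := fun w => -(1 - β) / (1 - β * w) ^ 2 with hg'
  set F : ℝ → ℝ := fun u => u ^ p * (1 - u) ^ q / (1 - β * u) ^ (p + q + 2) with hF
  have hgmem : ∀ w ∈ Set.Icc (0:ℝ) 1, g w ∈ Set.Icc (0:ℝ) 1 := by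
    intro w hw
    have h1 := hd w hw.1
    constructor
    · apply div_nonneg (by linarith [hw.2]) h1.le
    · rw [div_le_one h1]; nlinarith [hw.1, hw.2]
  have hderiv : ∀ w ∈ Set.Icc (0:ℝ) 1, HasDerivAt g (g' w) w := by
    intro w hw
    have h1 := hd w hw.1
    have h2 : HasDerivAt (fun y : ℝ => 1 - y) (-1) w := by
      simpa using (hasDerivAt_id w).const_sub 1
    have h3 : HasDerivAt (fun y : ℝ => 1 - β * y) (-(β * 1)) w := by
      simpa using ((hasDerivAt_id w).const_mul β).const_sub 1
    have := h2.div h3 h1.ne'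
    convert this using 1
    · rfl
    · rfl
    · rfl
    · simp only [hg']
      ring
  have hcontg : ContinuousOn g (Set.uIcc (0:ℝ) 1) := by
    rw [huIcc]
    exact ContinuousOn.div (by fun_prop) (by fun_prop) (fun w hw => (hd w hw.1).ne')
  have hcontg' : ContinuousOn g' (Set.uIcc (0:ℝ) 1) := by
    rw [huIcc]
    exact ContinuousOn.div (by fun_prop) (by fun_prop)
      (fun w hw => pow_ne_zero _ (hd w hw.1).ne')
  have hcontF : ContinuousOn F (Set.Icc (0:ℝ) 1) := by
    exact ContinuousOn.div (by fun_prop) (by fun_prop)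
      (fun u hu => pow_ne_zero _ (hd u hu.1).ne')
  have hderivIn : ∀ w ∈ Set.Ioo (min (0:ℝ) 1) (max 0 1), HasDerivWithinAt g (g' w) (Set.Ioi w) w := by
    intro w hw
    rw [min_eq_left zero_le_one, max_eq_right zero_le_one] at hw
    exact (hderiv w (Set.Ioo_subset_Icc_self hw)).hasDerivWithinAt
  have hcontFim : ContinuousOn F (g '' Set.uIcc (0:ℝ) 1) := by
    rw [huIcc]
    exact hcontF.mono (by rintro u ⟨w, hw, rfl⟩; exact hgmem w hw)
  have hsub := intervalIntegral.integral_comp_smul_deriv'' (a := (0:ℝ)) (b := 1)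
    hcontg hderivIn hcontg' hcontFim
  have hg0 : g 0 = 1 := by simp [hg]
  have hg1 : g 1 = 0 := by simp [hg]
  rw [hg0, hg1] at hsub
  have hpt : ∀ w ∈ Set.uIcc (0:ℝ) 1, g' w • (F ∘ g) w
      = -((w ^ q * (1 - w) ^ p) / (1 - β) ^ (p + 1)) := by
    intro w hw
    rw [huIcc] at hw
    have h1 := hd w hw.1
    have e1 : 1 - g w = (1 - β) * w / (1 - β * w) := by
      rw [hg]; simp only; rw [one_sub_div h1.ne']; congr 1; ring
    have e2 : 1 - β * g w = (1 - β) / (1 - β * w) := by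
      rw [hg]; field_simp; ring
    have hFg : (F ∘ g) w = ((1 - w) / (1 - β * w)) ^ p * ((1 - β) * w / (1 - β * w)) ^ q
        / ((1 - β) / (1 - β * w)) ^ (p + q + 2) := by
      simp only [Function.comp, hF, e1, e2]
      rw [hg]
    rw [hFg, smul_eq_mul, div_pow, div_pow, div_pow, hg', mul_pow]
    field_simp
    ring
  rw [intervalIntegral.integral_congr hpt] at hsub
  rw [intervalIntegral.integral_neg, intervalIntegral.integral_symm (a := 0) (b := 1)] at hsub
  have hsub2 : ∫ u in (0:ℝ)..1, F u = ∫ w in (0:ℝ)..1, w ^ q * (1 - w) ^ p / (1 - β) ^ (p + 1) :=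
    by linarith
  have hbeta : ∫ w in (0:ℝ)..1, w ^ q * (1 - w) ^ p / (1 - β) ^ (p + 1)
      = ((q.factorial * p.factorial : ℝ) / (q + p + 1).factorial) / (1 - β) ^ (p + 1) := by
    simp_rw [div_eq_mul_inv]
    rw [intervalIntegral.integral_mul_const, betaNat]
    ring
  show ∫ u in (0:ℝ)..1, F u = _
  rw [hsub2, hbeta, mul_comm (q.factorial : ℝ), add_comm q p]

lemma setIcc_eq_interval (f : ℝ → ℝ) :
    ∫ t in Set.Icc (0:ℝ) 1, f t = ∫ t in (0:ℝ)..1, f t := by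
  rw [MeasureTheory.integral_Icc_eq_integral_Ioc, intervalIntegral.integral_of_le zero_le_one]

lemma Kval (A C : ℝ) (hA : 0 < A) (hC : 0 ≤ C) (p q : ℕ) :
    ∫ y in Set.Icc (0:ℝ) 1, y ^ p * (1 - y) ^ q / (A + C * y) ^ (p + q + 2)
      = ((p.factorial * q.factorial : ℝ) / (p + q + 1).factorial)
          / (A ^ (q + 1) * (A + C) ^ (p + 1)) := by
  rw [setIcc_eq_interval]
  set β : ℝ := -(C / A) with hβdef
  have hβ : β ≤ 0 := by rw [hβdef]; simp; positivity
  have key : ∀ y : ℝ, A + C * y = A * (1 - β * y) := by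
    intro y; rw [hβdef]; field_simp; ring
  have h1 : ∀ y : ℝ, y ^ p * (1 - y) ^ q / (A + C * y) ^ (p + q + 2)
      = (y ^ p * (1 - y) ^ q / (1 - β * y) ^ (p + q + 2)) / A ^ (p + q + 2) := by
    intro y
    rw [key y, mul_pow, mul_comm (A ^ (p + q + 2)), ← div_div]
  simp_rw [h1]
  rw [intervalIntegral.integral_div, Jval β hβ p q]
  have he : 1 - β = (A + C) / A := by rw [hβdef]; field_simp; ring
  rw [he, div_pow]
  have hfac : ((p.factorial * q.factorial : ℝ) / (p + q + 1).factorial) ≠ 0 ∨ True := Or.inr trivial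
  have hApq : (A : ℝ) ^ (p + q + 2) = A ^ (q + 1) * A ^ (p + 1) := by
    rw [← pow_add]; ring_nf
  field_simp
  rw [hApq]
  ring

lemma key1d (A B : ℝ) (hA : 0 < A) (hB : 0 ≤ B) (p q r s : ℕ) (h : p + q = r + s) :
    (r.factorial * s.factorial : ℝ) * A ^ r
        * ∫ x in Set.Icc (0:ℝ) 1, x ^ p * (1 - x) ^ q / (A + B * x) ^ (r + 1)
      = (p.factorial * q.factorial : ℝ) * A ^ p
        * ∫ x in Set.Icc (0:ℝ) 1, x ^ r * (1 - x) ^ s / (A + B * x) ^ (p + 1) := by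
  set G : ℝ → ℝ → ℝ :=
    fun x y => x ^ p * (1 - x) ^ q * (y ^ r * (1 - y) ^ s / (A + B * x * y) ^ (r + s + 2))
    with hG
  set I1 : ℝ := ∫ x in Set.Icc (0:ℝ) 1, x ^ p * (1 - x) ^ q / (A + B * x) ^ (r + 1) with hI1
  set I2 : ℝ := ∫ x in Set.Icc (0:ℝ) 1, x ^ r * (1 - x) ^ s / (A + B * x) ^ (p + 1) with hI2
  have hexp : r + s + 2 = p + q + 2 := by omega
  have hfac : (r + s + 1).factorial = (p + q + 1).factorial := by rw [show r+s+1 = p+q+1 by omega]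
  -- integrability
  have hGint : Integrable (Function.uncurry G)
      ((volume.restrict (Set.Icc (0:ℝ) 1)).prod (volume.restrict (Set.Icc (0:ℝ) 1))) := by
    rw [Measure.prod_restrict]
    apply ContinuousOn.integrableOn_compact (isCompact_Icc.prod isCompact_Icc)
    apply ContinuousOn.mul (by fun_prop)
    apply ContinuousOn.div (by fun_prop) (by fun_prop)
    rintro ⟨x, y⟩ ⟨hx, hy⟩
    have : 0 < A + B * x * y := by nlinarith [hx.1, hy.1, mul_nonneg (mul_nonneg hB hx.1) hy.1]
    exact pow_ne_zero _ this.ne'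
  have hswap : (∫ x in Set.Icc (0:ℝ) 1, ∫ y in Set.Icc (0:ℝ) 1, G x y)
      = ∫ y in Set.Icc (0:ℝ) 1, ∫ x in Set.Icc (0:ℝ) 1, G x y :=
    integral_integral_swap hGint
  -- evaluation in the first order
  have inner1 : ∀ x ∈ Set.Icc (0:ℝ) 1, (∫ y in Set.Icc (0:ℝ) 1, G x y)
      = (x ^ p * (1 - x) ^ q / (A + B * x) ^ (r + 1))
        * ((r.factorial * s.factorial : ℝ) / (p + q + 1).factorial / A ^ (s + 1)) := by
    intro x hx
    have hBx : 0 ≤ B * x := mul_nonneg hB hx.1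
    have hGx : ∀ y, G x y = x ^ p * (1 - x) ^ q
        * (y ^ r * (1 - y) ^ s / (A + (B * x) * y) ^ (r + s + 2)) := fun y => rfl
    have hden : (A + B * x) ≠ 0 := by nlinarith [hx.1]
    simp_rw [hGx, MeasureTheory.integral_const_mul, Kval A (B * x) hA hBx r s, hfac]
    have hFne : ((p + q + 1).factorial : ℝ) ≠ 0 := by positivity
    field_simp
  have hD1 : (∫ x in Set.Icc (0:ℝ) 1, ∫ y in Set.Icc (0:ℝ) 1, G x y)
      = ((r.factorial * s.factorial : ℝ) / (p + q + 1).factorial / A ^ (s + 1)) * I1 := by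
    rw [setIntegral_congr_fun measurableSet_Icc inner1, MeasureTheory.integral_mul_const, hI1]
    ring
  -- evaluation in the second order
  have inner2 : ∀ y ∈ Set.Icc (0:ℝ) 1, (∫ x in Set.Icc (0:ℝ) 1, G x y)
      = (y ^ r * (1 - y) ^ s / (A + B * y) ^ (p + 1))
        * ((p.factorial * q.factorial : ℝ) / (p + q + 1).factorial / A ^ (q + 1)) := by
    intro y hy
    have hBy : 0 ≤ B * y := mul_nonneg hB hy.1
    have hGy : ∀ x, G x y = y ^ r * (1 - y) ^ s
        * (x ^ p * (1 - x) ^ q / (A + (B * y) * x) ^ (p + q + 2)) := by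
      intro x
      simp only [hG]
      rw [show A + B * x * y = A + B * y * x by ring, hexp]
      ring
    have hden : (A + B * y) ≠ 0 := by nlinarith [hy.1]
    simp_rw [hGy, MeasureTheory.integral_const_mul, Kval A (B * y) hA hBy p q]
    have hFne : ((p + q + 1).factorial : ℝ) ≠ 0 := by positivity
    field_simp
  have hD2 : (∫ y in Set.Icc (0:ℝ) 1, ∫ x in Set.Icc (0:ℝ) 1, G x y)
      = ((p.factorial * q.factorial : ℝ) / (p + q + 1).factorial / A ^ (q + 1)) * I2 := by
    rw [setIntegral_congr_fun measurableSet_Icc inner2, MeasureTheory.integral_mul_const, hI2]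
    ring
  have heq := hD1.symm.trans (hswap.trans hD2)
  have hFne : ((p + q + 1).factorial : ℝ) ≠ 0 := by positivity
  have h2 : (r.factorial * s.factorial : ℝ) * A ^ (q + 1) * I1
      = (p.factorial * q.factorial : ℝ) * A ^ (s + 1) * I2 := by
    have hAs : (A:ℝ) ^ (s+1) ≠ 0 := by positivity
    have hAq : (A:ℝ) ^ (q+1) ≠ 0 := by positivity
    field_simp at heq
    exact mul_right_cancel₀ hFne (by linear_combination ((p + q + 1).factorial : ℝ) * heq)
  have hpow : A ^ r * A ^ (s + 1) = A ^ p * A ^ (q + 1) := by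
    rw [← pow_add, ← pow_add, show r + (s+1) = p + (q+1) by omega]
  have hmul : (r.factorial * s.factorial : ℝ) * A ^ r * I1 * (A ^ (s+1) * A ^ (q+1))
      = (p.factorial * q.factorial : ℝ) * A ^ p * I2 * (A ^ (s+1) * A ^ (q+1)) := by
    calc (r.factorial * s.factorial : ℝ) * A ^ r * I1 * (A ^ (s+1) * A ^ (q+1))
        = ((r.factorial * s.factorial : ℝ) * A ^ (q+1) * I1) * (A ^ r * A ^ (s+1)) := by ring
      _ = ((p.factorial * q.factorial : ℝ) * A ^ (s+1) * I2) * (A ^ p * A ^ (q+1)) := by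
          rw [h2, hpow]
      _ = (p.factorial * q.factorial : ℝ) * A ^ p * I2 * (A ^ (s+1) * A ^ (q+1)) := by ring
  exact mul_right_cancel₀ (by positivity) hmul

lemma lint_ofReal (A B : ℝ) (hA : 0 < A) (hB : 0 ≤ B) (p q r : ℕ) :
    ∫⁻ t in Set.Icc (0:ℝ) 1, ENNReal.ofReal (t ^ p * (1 - t) ^ q / (A + B * t) ^ (r + 1))
      = ENNReal.ofReal (∫ t in Set.Icc (0:ℝ) 1, t ^ p * (1 - t) ^ q / (A + B * t) ^ (r + 1)) := by
  have hpos : ∀ t ∈ Set.Icc (0:ℝ) 1, (0:ℝ) < A + B * t := by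
    intro t ht; nlinarith [ht.1, mul_nonneg hB ht.1]
  have hcont : ContinuousOn (fun t : ℝ => t ^ p * (1 - t) ^ q / (A + B * t) ^ (r + 1))
      (Set.Icc 0 1) :=
    ContinuousOn.div (by fun_prop) (by fun_prop) (fun t ht => pow_ne_zero _ (hpos t ht).ne')
  have hint : IntegrableOn (fun t : ℝ => t ^ p * (1 - t) ^ q / (A + B * t) ^ (r + 1))
      (Set.Icc 0 1) := hcont.integrableOn_compact isCompact_Icc
  have hnn : 0 ≤ᵐ[volume.restrict (Set.Icc (0:ℝ) 1)]
      (fun t : ℝ => t ^ p * (1 - t) ^ q / (A + B * t) ^ (r + 1)) := by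
    refine (ae_restrict_iff' measurableSet_Icc).2 (Filter.Eventually.of_forall fun t ht => ?_)
    have h1 := ht.1
    have h3 : (0:ℝ) ≤ 1 - t := by linarith [ht.2]
    have := hpos t ht
    positivity
  exact (ofReal_integral_eq_lintegral_ofReal hint hnn).symm

lemma key1dL (A B : ℝ) (hA : 0 < A) (hB : 0 ≤ B) (p q r s : ℕ) (h : p + q = r + s) :
    ENNReal.ofReal ((r.factorial * s.factorial : ℝ) * A ^ r)
        * ∫⁻ t in Set.Icc (0:ℝ) 1, ENNReal.ofReal (t ^ p * (1 - t) ^ q / (A + B * t) ^ (r + 1))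
      = ENNReal.ofReal ((p.factorial * q.factorial : ℝ) * A ^ p)
        * ∫⁻ t in Set.Icc (0:ℝ) 1, ENNReal.ofReal (t ^ r * (1 - t) ^ s / (A + B * t) ^ (p + 1)) := by
  rw [lint_ofReal A B hA hB p q r, lint_ofReal A B hA hB r s p]
  rw [← ENNReal.ofReal_mul (by positivity), ← ENNReal.ofReal_mul (by positivity)]
  rw [key1d A B hA hB p q r s h]

lemma measurable_ent {n : ℕ} (k : ℕ) : Measurable fun x : Fin n → ℝ => ent x k := by
  unfold ent
  by_cases h : k - 1 < n
  · simp only [h, dif_pos]; exact measurable_pi_apply _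
  · simp only [h, dif_neg, not_false_iff]; exact measurable_const

lemma measurable_delta {n : ℕ} (k : ℕ) : Measurable fun x : Fin n → ℝ => delta x k := by
  induction k with
  | zero => exact measurable_const
  | succ k ih =>
    simp only [delta]
    exact ((measurable_ent (k+1)).mul ih).const_sub 1

lemma measurable_zpowf {α} [MeasurableSpace α] {f : α → ℝ} (hf : Measurable f) (m : ℤ) :
    Measurable fun x => f x ^ m := by
  cases m with
  | ofNat k => simpa using hf.pow_const k
  | negSucc k => simpa [zpow_negSucc] using (hf.pow_const (k+1))

lemma measurable_integrand {n : ℕ} (a b c : ℕ → ℤ) :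
    Measurable fun x : Fin n → ℝ => ENNReal.ofReal
      ((∏ k ∈ Icc 1 n, ent x k ^ a k * (1 - ent x k) ^ b k) /
        ((∏ k ∈ Icc 2 n, delta x k ^ c k) * delta x n)) := by
  apply Measurable.ennreal_ofReal
  apply Measurable.div
  · apply Finset.measurable_prod
    intro k _
    exact (measurable_zpowf (measurable_ent k) (a k)).mul
      (measurable_zpowf ((measurable_ent k).const_sub 1) (b k))
  · exact (Finset.measurable_prod _ fun k _ =>
      measurable_zpowf (measurable_delta k) (c k)).mul (measurable_delta n)

instance : IsProbabilityMeasure (volume.restrict (Set.Icc (0:ℝ) 1)) :=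
  ⟨by simp [Real.volume_Icc]⟩

lemma cube_pi (n : ℕ) :
    Measure.pi (fun _ : Fin n => volume.restrict (Set.Icc (0:ℝ) 1))
      = (volume : Measure (Fin n → ℝ)).restrict (cube n) := by
  refine Measure.pi_eq fun s hs => ?_
  rw [Measure.restrict_apply (MeasurableSet.univ_pi hs)]
  have h2 : Set.pi Set.univ s ∩ cube n = Set.pi Set.univ (fun i => s i ∩ Set.Icc 0 1) := by
    rw [cube, ← Set.pi_inter_distrib]
  rw [h2, volume_pi_pi]
  exact Finset.prod_congr rfl fun i _ => (Measure.restrict_apply (hs i)).symm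

lemma step {N : ℕ} (i : Fin N) {f : (Fin N → ℝ) → ℝ≥0∞} (hf : Measurable f) :
    ∫⁻ x, f x ∂Measure.pi (fun _ : Fin N => volume.restrict (Set.Icc (0:ℝ) 1))
      = ∫⁻ x, (∫⁻ t in Set.Icc (0:ℝ) 1, f (Function.update x i t))
          ∂Measure.pi (fun _ : Fin N => volume.restrict (Set.Icc (0:ℝ) 1)) := by
  set μ : Fin N → Measure ℝ := fun _ => volume.restrict (Set.Icc (0:ℝ) 1) with hμ
  have h1 : ∀ x : Fin N → ℝ, (∫⁻ t in Set.Icc (0:ℝ) 1, f (Function.update x i t))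
      = (∫⋯∫⁻_{i}, f ∂μ) x := by
    intro x; rw [lmarginal_singleton]
  simp_rw [h1]
  have x0 : Fin N → ℝ := fun _ => 0
  rw [lintegral_eq_lmarginal_univ (fun _ => 0),
      lintegral_eq_lmarginal_univ (μ := μ) (f := (∫⋯∫⁻_{i}, f ∂μ)) (fun _ => 0)]
  rw [← Finset.insert_erase (Finset.mem_univ i)]
  rw [lmarginal_insert' _ hf (Finset.notMem_erase i _),
      lmarginal_insert' _ (hf.lmarginal μ) (Finset.notMem_erase i _)]
  congr 1
  funext x
  have h2 : ∀ t : ℝ, (∫⋯∫⁻_{i}, f ∂μ) (Function.update x i t) = (∫⋯∫⁻_{i}, f ∂μ) x :=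
    fun t => lmarginal_update_of_mem μ (Finset.mem_singleton_self i) f x t
  simp_rw [h2]
  rw [lintegral_const]
  have hμ1 : (μ i) Set.univ = 1 := measure_univ
  rw [hμ1, mul_one]
  exact h1 x

lemma ae_cube {N : ℕ} :
    ∀ᵐ x ∂Measure.pi (fun _ : Fin N => volume.restrict (Set.Icc (0:ℝ) 1)),
      ∀ j, x j ∈ Set.Icc (0:ℝ) 1 := by
  rw [MeasureTheory.ae_all_iff]
  intro j
  rw [ae_iff]
  have : {x : Fin N → ℝ | ¬ x j ∈ Set.Icc (0:ℝ) 1}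
      = Function.eval j ⁻¹' (Set.Icc (0:ℝ) 1)ᶜ := rfl
  rw [this]
  apply Measure.pi_eval_preimage_null
  rw [Measure.restrict_apply measurableSet_Icc.compl]
  simp

lemma ae_ne_one {N : ℕ} (j : Fin N) :
    ∀ᵐ x ∂Measure.pi (fun _ : Fin N => volume.restrict (Set.Icc (0:ℝ) 1)), x j ≠ 1 := by
  rw [ae_iff]
  have h : {x : Fin N → ℝ | ¬ x j ≠ 1} = Function.eval j ⁻¹' ({(1:ℝ)} : Set ℝ) := by
    ext x; simp [Function.eval]
  rw [h]
  apply Measure.pi_eval_preimage_null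
  apply le_antisymm _ zero_le
  calc (volume.restrict (Set.Icc (0:ℝ) 1)) {(1:ℝ)} ≤ volume {(1:ℝ)} :=
        Measure.restrict_le_self _
    _ = 0 := Real.volume_singleton

lemma ent_mem_Icc {n : ℕ} {x : Fin n → ℝ} (hx : ∀ j, x j ∈ Set.Icc (0:ℝ) 1) (k : ℕ) :
    ent x k ∈ Set.Icc (0:ℝ) 1 := by
  unfold ent
  by_cases h : k - 1 < n
  · simp only [h, dif_pos]; exact hx _
  · simp only [h, dif_neg, not_false_iff]; exact ⟨le_refl _, zero_le_one⟩

lemma delta_mem_Icc {n : ℕ} {x : Fin n → ℝ} (hx : ∀ j, x j ∈ Set.Icc (0:ℝ) 1) (k : ℕ) :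
    delta x k ∈ Set.Icc (0:ℝ) 1 := by
  induction k with
  | zero => exact ⟨zero_le_one, le_refl _⟩
  | succ k ih =>
    obtain ⟨h1, h2⟩ := ih
    obtain ⟨h3, h4⟩ := ent_mem_Icc hx (k + 1)
    simp only [delta]
    constructor
    · nlinarith
    · nlinarith

lemma ent_update_ne {n : ℕ} {x : Fin n → ℝ} {i : Fin n} {t : ℝ} {k : ℕ} (hk : k - 1 ≠ (i:ℕ)) :
    ent (Function.update x i t) k = ent x k := by
  unfold ent
  by_cases h : k - 1 < n
  · simp only [h, dif_pos]
    exact Function.update_of_ne (Fin.ne_of_val_ne hk) _ _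
  · simp only [h, dif_neg, not_false_iff]

lemma ent_update_eq {n : ℕ} {x : Fin n → ℝ} {i : Fin n} {t : ℝ} :
    ent (Function.update x i t) ((i:ℕ) + 1) = t := by
  unfold ent
  have h : (i:ℕ) + 1 - 1 < n := by simpa using i.isLt
  simp only [h, dif_pos]
  have : (⟨(i:ℕ) + 1 - 1, h⟩ : Fin n) = i := by
    apply Fin.ext; simp
  rw [this, Function.update_self]

lemma delta_update {n : ℕ} {x : Fin n → ℝ} {i : Fin n} {t : ℝ} :
    ∀ k, k ≤ (i:ℕ) → delta (Function.update x i t) k = delta x k := by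
  intro k
  induction k with
  | zero => intro _; rfl
  | succ k ih =>
    intro hk
    simp only [delta]
    rw [ent_update_ne (by omega), ih (by omega)]

lemma delta_succ {n : ℕ} (x : Fin n → ℝ) (k : ℕ) :
    delta x (k + 1) = 1 - ent x (k + 1) * delta x k := rfl

lemma delta_eq {n : ℕ} (x : Fin n → ℝ) {k : ℕ} (hk : 1 ≤ k) :
    delta x k = 1 - ent x k * delta x (k - 1) := by
  cases k with
  | zero => omega
  | succ j => rfl


lemma inner_eq (n : ℕ) (hn : 2 ≤ n) (a b c : ℕ → ℤ)
    (hc : ∀ k, 2 ≤ k → k ≤ n - 1 → c k = 0)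
    (h1 : 0 ≤ a (n - 1)) (h2 : 0 ≤ b (n - 1)) (h3 : 0 ≤ c n)
    (h4 : 0 ≤ a (n - 1) + b (n - 1) - c n)
    (x : Fin n → ℝ) (hx : ∀ j, x j ∈ Set.Icc (0:ℝ) 1)
    (hx1 : x ⟨n - 1, by omega⟩ ≠ 1) :
    (∫⁻ t in Set.Icc (0:ℝ) 1, F n a b c (Function.update x ⟨n - 2, by omega⟩ t))
      = ENNReal.ofReal
          ((Nat.factorial (a (n - 1)).toNat * Nat.factorial (b (n - 1)).toNat : ℝ) /
            (Nat.factorial (c n).toNat *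
              Nat.factorial ((a (n - 1) + b (n - 1) - c n).toNat)))
        * ∫⁻ t in Set.Icc (0:ℝ) 1,
            F n (fun k => if k = n - 1 then c n else a k)
              (fun k => if k = n - 1 then a (n - 1) + b (n - 1) - c n
                else if k = n then a (n - 1) + b n - c n else b k)
              (fun k => if k = n then a (n - 1) else c k)
              (Function.update x ⟨n - 2, by omega⟩ t) := by
  set i : Fin n := ⟨n - 2, by omega⟩ with hidef
  set il : Fin n := ⟨n - 1, by omega⟩ with hildef
  set α : ℕ := (a (n - 1)).toNat with hα
  set β : ℕ := (b (n - 1)).toNat with hβ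
  set γ : ℕ := (c n).toNat with hγ
  set δ : ℕ := (a (n - 1) + b (n - 1) - c n).toNat with hδ
  have haα : a (n - 1) = (α : ℤ) := (Int.toNat_of_nonneg h1).symm
  have hbβ : b (n - 1) = (β : ℤ) := (Int.toNat_of_nonneg h2).symm
  have hcγ : c n = (γ : ℤ) := (Int.toNat_of_nonneg h3).symm
  have hdδ : a (n - 1) + b (n - 1) - c n = (δ : ℤ) := (Int.toNat_of_nonneg h4).symm
  have hsum : α + β = γ + δ := by omega
  set A : ℝ := 1 - x il with hAdef
  set B : ℝ := x il * delta x (n - 2) with hBdef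
  have hxil := hx il
  have hA : 0 < A := by
    rcases lt_or_eq_of_le hxil.2 with h | h
    · simp [hAdef]; linarith
    · exact absurd h hx1
  have hB : 0 ≤ B := mul_nonneg hxil.1 (delta_mem_Icc hx (n - 2)).1
  -- the parts of the product not involving coordinate i
  set g₁ : ℝ := ∏ k ∈ (Icc 1 n).erase (n - 1), ent x k ^ a k * (1 - ent x k) ^ b k with hg₁
  set g₂ : ℝ := ∏ k ∈ (Icc 1 n).erase (n - 1),
      ent x k ^ (if k = n - 1 then c n else a k)
        * (1 - ent x k) ^ (if k = n - 1 then a (n - 1) + b (n - 1) - c n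
            else if k = n then a (n - 1) + b n - c n else b k) with hg₂
  have hg₁nn : 0 ≤ g₁ := by
    apply Finset.prod_nonneg
    intro k _
    exact mul_nonneg (zpow_nonneg (ent_mem_Icc hx k).1 _)
      (zpow_nonneg (by linarith [(ent_mem_Icc hx k).2]) _)
  have hg₂nn : 0 ≤ g₂ := by
    apply Finset.prod_nonneg
    intro k _
    exact mul_nonneg (zpow_nonneg (ent_mem_Icc hx k).1 _)
      (zpow_nonneg (by linarith [(ent_mem_Icc hx k).2]) _)
  -- delta of updated point
  have hival : (i:ℕ) = n - 2 := rfl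
  have hilval : (il:ℕ) = n - 1 := rfl
  have hneq : il ≠ i := by
    intro h
    have h' := congrArg Fin.val h
    rw [hival, hilval] at h'
    omega
  have entn : ∀ y : Fin n → ℝ, ent y n = y il := by
    intro y
    unfold ent
    rw [dif_pos (by omega : n - 1 < n)]
  have hdeltan : ∀ t : ℝ, delta (Function.update x i t) n = A + B * t := by
    intro t
    have e0 : delta (Function.update x i t) (n - 2) = delta x (n - 2) :=
      delta_update (n - 2) (by omega)
    have e1 : delta (Function.update x i t) (n - 1) = 1 - t * delta x (n - 2) := by
      rw [delta_eq _ (by omega : 1 ≤ n - 1), show n - 1 - 1 = n - 2 by omega, e0,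
        show n - 1 = (i:ℕ) + 1 by omega, ent_update_eq]
    have e2 : ent (Function.update x i t) n = x il := by
      rw [entn, Function.update_of_ne hneq]
    have e3 := delta_eq (Function.update x i t) (by omega : 1 ≤ n)
    rw [e3, e2, e1, hAdef, hBdef]
    ring
  have hmem : n - 1 ∈ Icc 1 n := by simp; omega
  have hmemn : n ∈ (Icc 1 n).erase (n - 1) := by
    rw [Finset.mem_erase]; constructor; omega; simp; omega
  -- decomposition of the two integrands
  have hdec1 : ∀ t : ℝ, F n a b c (Function.update x i t)
      = ENNReal.ofReal g₁ * ENNReal.ofReal (t ^ α * (1 - t) ^ β / (A + B * t) ^ (γ + 1)) := by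
    intro t
    have h_t : ent (Function.update x i t) (n - 1) = t := by
      rw [show n - 1 = (i:ℕ) + 1 by omega]
      exact ent_update_eq
    have hsplit : (∏ k ∈ Icc 1 n,
          ent (Function.update x i t) k ^ a k * (1 - ent (Function.update x i t) k) ^ b k)
        = (t ^ a (n - 1) * (1 - t) ^ b (n - 1)) * g₁ := by
      rw [← Finset.mul_prod_erase _ _ hmem, h_t]
      congr 1
      refine Finset.prod_congr rfl (fun k hk => ?_)
      obtain ⟨hk1, hk2⟩ := Finset.mem_erase.mp hk
      obtain ⟨hk3, hk4⟩ := Finset.mem_Icc.mp hk2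
      rw [ent_update_ne (by omega)]
    have hdenom : (∏ k ∈ Icc 2 n, delta (Function.update x i t) k ^ c k)
        * delta (Function.update x i t) n = (A + B * t) ^ (γ + 1) := by
      have hprod : (∏ k ∈ Icc 2 n, delta (Function.update x i t) k ^ c k)
          = delta (Function.update x i t) n ^ c n := by
        refine Finset.prod_eq_single n (fun k hk hkn => ?_) (fun hne => ?_)
        · obtain ⟨hk1, hk2⟩ := Finset.mem_Icc.mp hk
          rw [hc k hk1 (by omega), zpow_zero]
        · exact absurd (Finset.mem_Icc.mpr ⟨hn, le_refl n⟩) hne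
      rw [hprod, hdeltan t, hcγ, zpow_natCast, ← pow_succ]
    show ENNReal.ofReal _ = _
    rw [hsplit, hdenom, haα, hbβ, zpow_natCast, zpow_natCast, ← ENNReal.ofReal_mul hg₁nn]
    congr 1
    ring
  have hdec2 : ∀ t : ℝ, F n (fun k => if k = n - 1 then c n else a k)
      (fun k => if k = n - 1 then a (n - 1) + b (n - 1) - c n
        else if k = n then a (n - 1) + b n - c n else b k)
      (fun k => if k = n then a (n - 1) else c k) (Function.update x i t)
      = ENNReal.ofReal g₂ * ENNReal.ofReal (t ^ γ * (1 - t) ^ δ / (A + B * t) ^ (α + 1)) := by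
    intro t
    have h_t : ent (Function.update x i t) (n - 1) = t := by
      rw [show n - 1 = (i:ℕ) + 1 by omega]
      exact ent_update_eq
    have hsplit : (∏ k ∈ Icc 1 n,
          ent (Function.update x i t) k ^ (if k = n - 1 then c n else a k)
            * (1 - ent (Function.update x i t) k) ^ (if k = n - 1 then a (n - 1) + b (n - 1) - c n
                else if k = n then a (n - 1) + b n - c n else b k))
        = (t ^ c n * (1 - t) ^ (a (n - 1) + b (n - 1) - c n)) * g₂ := by
      rw [← Finset.mul_prod_erase _ _ hmem, h_t, if_pos rfl, if_pos rfl]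
      congr 1
      refine Finset.prod_congr rfl (fun k hk => ?_)
      obtain ⟨hk1, hk2⟩ := Finset.mem_erase.mp hk
      obtain ⟨hk3, hk4⟩ := Finset.mem_Icc.mp hk2
      rw [ent_update_ne (by omega)]
    have hdenom : (∏ k ∈ Icc 2 n,
          delta (Function.update x i t) k ^ (if k = n then a (n - 1) else c k))
        * delta (Function.update x i t) n = (A + B * t) ^ (α + 1) := by
      have hprod : (∏ k ∈ Icc 2 n,
            delta (Function.update x i t) k ^ (if k = n then a (n - 1) else c k))
          = delta (Function.update x i t) n ^ (if n = n then a (n - 1) else c n) := by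
        refine Finset.prod_eq_single n (fun k hk hkn => ?_) (fun hne => ?_)
        · obtain ⟨hk1, hk2⟩ := Finset.mem_Icc.mp hk
          rw [if_neg hkn, hc k hk1 (by omega), zpow_zero]
        · exact absurd (Finset.mem_Icc.mpr ⟨hn, le_refl n⟩) hne
      rw [hprod, if_pos rfl, hdeltan t, haα, zpow_natCast, ← pow_succ]
    show ENNReal.ofReal _ = _
    rw [hsplit, hdenom, hdδ, hcγ, zpow_natCast, zpow_natCast, ← ENNReal.ofReal_mul hg₂nn]
    congr 1
    ring
  -- the relation between g₁ and g₂
  have hgrel : g₁ * A ^ α = g₂ * A ^ γ := by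
    have hAne : A ≠ 0 := hA.ne'
    have h1A : (1 : ℝ) - ent x n = A := by rw [entn x, hAdef]
    have hgsplit1 : g₁ = (ent x n ^ a n * (1 - ent x n) ^ b n)
        * ∏ k ∈ ((Icc 1 n).erase (n - 1)).erase n, ent x k ^ a k * (1 - ent x k) ^ b k :=
      (Finset.mul_prod_erase _ _ hmemn).symm
    have hgsplit2 : g₂ = (ent x n ^ a n * (1 - ent x n) ^ ((α:ℤ) + b n - (γ:ℤ)))
        * ∏ k ∈ ((Icc 1 n).erase (n - 1)).erase n, ent x k ^ a k * (1 - ent x k) ^ b k := by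
      rw [hg₂, ← Finset.mul_prod_erase _ _ hmemn]
      congr 1
      · rw [if_neg (by omega : ¬ n = n - 1), if_neg (by omega : ¬ n = n - 1), if_pos rfl,
          haα, hcγ]
      · refine Finset.prod_congr rfl (fun k hk => ?_)
        obtain ⟨hk1, hk2⟩ := Finset.mem_erase.mp hk
        obtain ⟨hk3, hk4⟩ := Finset.mem_erase.mp hk2
        rw [if_neg hk3, if_neg hk3, if_neg hk1]
    have hpow : A ^ (b n) * A ^ ((α:ℕ):ℤ) = A ^ ((α:ℤ) + b n - (γ:ℤ)) * A ^ ((γ:ℕ):ℤ) := by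
      rw [← zpow_add₀ hAne, ← zpow_add₀ hAne]
      congr 1
      ring
    rw [hgsplit1, hgsplit2, h1A, ← zpow_natCast A α, ← zpow_natCast A γ]
    linear_combination (ent x n ^ a n
      * ∏ k ∈ ((Icc 1 n).erase (n - 1)).erase n, ent x k ^ a k * (1 - ent x k) ^ b k) * hpow
  -- put everything together
  simp_rw [hdec1, hdec2]
  rw [lintegral_const_mul' _ _ ENNReal.ofReal_ne_top,
      lintegral_const_mul' _ _ ENNReal.ofReal_ne_top]
  set I₁ := ∫⁻ t in Set.Icc (0:ℝ) 1,
      ENNReal.ofReal (t ^ α * (1 - t) ^ β / (A + B * t) ^ (γ + 1)) with hI₁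
  set I₂ := ∫⁻ t in Set.Icc (0:ℝ) 1,
      ENNReal.ofReal (t ^ γ * (1 - t) ^ δ / (A + B * t) ^ (α + 1)) with hI₂
  have hkey := key1dL A B hA hB α β γ δ hsum
  have hCpos : (0:ℝ) < (γ.factorial * δ.factorial : ℝ) * A ^ γ := by positivity
  have hC0 : ENNReal.ofReal ((γ.factorial * δ.factorial : ℝ) * A ^ γ) ≠ 0 :=
    (ENNReal.ofReal_pos.mpr hCpos).ne'
  rw [← ENNReal.mul_right_inj hC0 ENNReal.ofReal_ne_top]
  calc ENNReal.ofReal ((γ.factorial * δ.factorial : ℝ) * A ^ γ) * (ENNReal.ofReal g₁ * I₁)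
      = ENNReal.ofReal g₁ *
          (ENNReal.ofReal ((γ.factorial * δ.factorial : ℝ) * A ^ γ) * I₁) := by ring
    _ = ENNReal.ofReal g₁ *
          (ENNReal.ofReal ((α.factorial * β.factorial : ℝ) * A ^ α) * I₂) := by rw [hkey]
    _ = ENNReal.ofReal (g₁ * ((α.factorial * β.factorial : ℝ) * A ^ α)) * I₂ := by
        rw [ENNReal.ofReal_mul hg₁nn]; ring
    _ = ENNReal.ofReal (((γ.factorial * δ.factorial : ℝ) * A ^ γ) *
          ((α.factorial * β.factorial : ℝ) / (γ.factorial * δ.factorial) * g₂)) * I₂ := by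
        congr 1
        apply congrArg
        have hne : (γ.factorial * δ.factorial : ℝ) ≠ 0 := by positivity
        calc g₁ * ((α.factorial * β.factorial : ℝ) * A ^ α)
            = (α.factorial * β.factorial : ℝ) * (g₁ * A ^ α) := by ring
          _ = (α.factorial * β.factorial : ℝ) * (g₂ * A ^ γ) := by rw [hgrel]
          _ = ((γ.factorial * δ.factorial : ℝ) * A ^ γ) *
              ((α.factorial * β.factorial : ℝ) / (γ.factorial * δ.factorial) * g₂) := by
              field_simp
    _ = ENNReal.ofReal ((γ.factorial * δ.factorial : ℝ) * A ^ γ) *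
          (ENNReal.ofReal ((α.factorial * β.factorial : ℝ) / (γ.factorial * δ.factorial))
            * (ENNReal.ofReal g₂ * I₂)) := by
        rw [ENNReal.ofReal_mul (by positivity : (0:ℝ) ≤ (γ.factorial * δ.factorial : ℝ) * A ^ γ),
            ENNReal.ofReal_mul
              (by positivity : (0:ℝ) ≤ (α.factorial * β.factorial : ℝ) / (γ.factorial * δ.factorial))]
        ring

theorem stmt13 (n : ℕ) (hn : 2 ≤ n) (a b c : ℕ → ℤ) (hE : memE n a b c)
    (h1 : 0 ≤ a (n - 1)) (h2 : 0 ≤ b (n - 1)) (h3 : 0 ≤ c n)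
    (h4 : 0 ≤ a (n - 1) + b (n - 1) - c n) :
    Lint n a b c =
      ENNReal.ofReal
        ((Nat.factorial (a (n - 1)).toNat * Nat.factorial (b (n - 1)).toNat : ℝ) /
          (Nat.factorial (c n).toNat *
            Nat.factorial ((a (n - 1) + b (n - 1) - c n).toNat))) *
      Lint n (fun k => if k = n - 1 then c n else a k)
        (fun k => if k = n - 1 then a (n - 1) + b (n - 1) - c n
          else if k = n then a (n - 1) + b n - c n else b k)
        (fun k => if k = n then a (n - 1) else c k) := by
  obtain ⟨hc, -, -⟩ := hE
  set i : Fin n := ⟨n - 2, by omega⟩ with hidef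
  set il : Fin n := ⟨n - 1, by omega⟩ with hildef
  have hL1 : Lint n a b c = ∫⁻ x in cube n, F n a b c x := rfl
  have hL2 : Lint n (fun k => if k = n - 1 then c n else a k)
      (fun k => if k = n - 1 then a (n - 1) + b (n - 1) - c n
        else if k = n then a (n - 1) + b n - c n else b k)
      (fun k => if k = n then a (n - 1) else c k)
      = ∫⁻ x in cube n, F n (fun k => if k = n - 1 then c n else a k)
          (fun k => if k = n - 1 then a (n - 1) + b (n - 1) - c n
            else if k = n then a (n - 1) + b n - c n else b k)
          (fun k => if k = n then a (n - 1) else c k) x := rfl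
  rw [hL1, hL2, ← cube_pi n]
  have hm1 : Measurable (F n a b c) := measurable_integrand a b c
  have hm2 : Measurable (F n (fun k => if k = n - 1 then c n else a k)
      (fun k => if k = n - 1 then a (n - 1) + b (n - 1) - c n
        else if k = n then a (n - 1) + b n - c n else b k)
      (fun k => if k = n then a (n - 1) else c k)) := measurable_integrand _ _ _
  rw [step i hm1, step i hm2]
  rw [← lintegral_const_mul' _ _ ENNReal.ofReal_ne_top]
  apply lintegral_congr_ae
  filter_upwards [ae_cube, ae_ne_one il] with x hx hx1
  exact inner_eq n hn a b c hc h1 h2 h3 h4 x hx hx1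

end
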